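/- Let K = RatFunc ℚ with A = RatFunc.X. Let V be a K-vector space, s : V →ₗ[K] V a K-linear endomorphism, and W ⊆ V a subspace with s(W) ⊆ W. Let m : ℕ and define Δ₋ = A • id - A⁻¹ • s, Δ₊ₘ = A^(4m+1) • s - A⁻¹ • id, and Δ₋₁ = A • id - A⁻³ • s. If v ∈ V and p, q : ℕ satisfy (Δ₋₁ ∘ Δ₋^p) v ∈ W and Δ₊ₘ^q v ∈ W, then v ∈ W. -/

import Mathlib

set_option synthInstance.maxHeartbeats 1000000
set_option maxHeartbeats 1000000

/-- The variable `A` of the field of rational functions `ℚ(A)`. -/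
noncomputable def A : RatFunc ℚ := RatFunc.X

lemma A_ne_zero : A ≠ 0 := RatFunc.X_ne_zero

lemma A_pow_ne_one {k : ℕ} (hk : k ≠ 0) : A ^ k ≠ 1 := by
  intro h
  have h' : (algebraMap (Polynomial ℚ) (RatFunc ℚ)) (Polynomial.X ^ k) =
      (algebraMap (Polynomial ℚ) (RatFunc ℚ)) 1 := by
    simpa [map_pow, RatFunc.algebraMap_X, A] using h
  have := RatFunc.algebraMap_injective ℚ h'
  have hdeg := congrArg Polynomial.natDegree this
  simp [Polynomial.natDegree_X_pow] at hdeg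
  exact hk hdeg

lemma pow_mem_invariant {V : Type*} [AddCommGroup V] [Module (RatFunc ℚ) V]
    (s : Module.End (RatFunc ℚ) V) (W : Submodule (RatFunc ℚ) V)
    (hW : ∀ w ∈ W, s w ∈ W) : ∀ (n : ℕ) (w : V), w ∈ W → (s ^ n) w ∈ W := by
  intro n
  induction n with
  | zero => intro w hw; simpa using hw
  | succ n ih =>
    intro w hw
    rw [pow_succ]
    exact ih _ (hW w hw)

lemma aeval_mem_invariant {V : Type*} [AddCommGroup V] [Module (RatFunc ℚ) V]
    (s : Module.End (RatFunc ℚ) V) (W : Submodule (RatFunc ℚ) V)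
    (hW : ∀ w ∈ W, s w ∈ W) (r : Polynomial (RatFunc ℚ)) {w : V} (hw : w ∈ W) :
    (Polynomial.aeval s r) w ∈ W := by
  rw [Polynomial.aeval_eq_sum_range]
  rw [LinearMap.sum_apply]
  apply Submodule.sum_mem
  intro i _
  rw [LinearMap.smul_apply]
  exact W.smul_mem _ (pow_mem_invariant s W hW i w hw)

open Polynomial in
/-- If `(Δ₋₁ ∘ Δ₋^p) v` and `Δ₊ₘ^q v` lie in an `s`-invariant subspace `W`, then `v ∈ W`. -/
theorem stmt_6 {V : Type*} [AddCommGroup V] [Module (RatFunc ℚ) V]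
    (s : Module.End (RatFunc ℚ) V) (W : Submodule (RatFunc ℚ) V)
    (hW : ∀ w ∈ W, s w ∈ W) (m : ℕ) (v : V) (p q : ℕ)
    (hp : (((A • (1 : Module.End (RatFunc ℚ) V) - A⁻¹ ^ 3 • s)
        * (A • (1 : Module.End (RatFunc ℚ) V) - A⁻¹ • s) ^ p)) v ∈ W)
    (hq : ((A ^ (4 * m + 1) • s - A⁻¹ • (1 : Module.End (RatFunc ℚ) V)) ^ q) v ∈ W) :
    v ∈ W := by
  have hA := A_ne_zero
  -- the polynomials
  set P : Polynomial (RatFunc ℚ) :=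
    (C A - C (A⁻¹ ^ 3) * X) * (C A - C A⁻¹ * X) ^ p with hP
  set Q : Polynomial (RatFunc ℚ) :=
    (C (A ^ (4 * m + 1)) * X - C A⁻¹) ^ q with hQ
  -- their evaluations at s
  have hPs : Polynomial.aeval s P = (A • (1 : Module.End (RatFunc ℚ) V) - A⁻¹ ^ 3 • s)
      * (A • (1 : Module.End (RatFunc ℚ) V) - A⁻¹ • s) ^ p := by
    simp [hP, Algebra.algebraMap_eq_smul_one, smul_mul_assoc]
  have hQs : Polynomial.aeval s Q =
      (A ^ (4 * m + 1) • s - A⁻¹ • (1 : Module.End (RatFunc ℚ) V)) ^ q := by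
    simp [hQ, Algebra.algebraMap_eq_smul_one, smul_mul_assoc, _root_.smul_pow]
  -- factorizations
  have e1 : -(A⁻¹ ^ 3) * A ^ 4 = -A := by field_simp
  have e2 : -A⁻¹ * A ^ 2 = -A := by field_simp
  have epow : A ^ (4 * m + 1) * A⁻¹ ^ (4 * m + 1) = 1 := by
    rw [← mul_pow, mul_inv_cancel₀ hA, one_pow]
  have e3 : A ^ (4 * m + 1) * A⁻¹ ^ (4 * m + 2) = A⁻¹ := by
    calc A ^ (4 * m + 1) * A⁻¹ ^ (4 * m + 2)
        = (A ^ (4 * m + 1) * A⁻¹ ^ (4 * m + 1)) * A⁻¹ := by rw [pow_succ]; ring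
      _ = A⁻¹ := by rw [epow, one_mul]
  have hfac1 : C A - C (A⁻¹ ^ 3) * X = C (-(A⁻¹ ^ 3)) * (X - C (A ^ 4)) := by
    rw [mul_sub, ← C_mul, e1, map_neg, map_neg]
    ring
  have hfac2 : C A - C A⁻¹ * X = C (-A⁻¹) * (X - C (A ^ 2)) := by
    rw [mul_sub, ← C_mul, e2, map_neg, map_neg]
    ring
  have hfac3 : C (A ^ (4 * m + 1)) * X - C A⁻¹ =
      C (A ^ (4 * m + 1)) * (X - C (A⁻¹ ^ (4 * m + 2))) := by
    rw [mul_sub, ← C_mul, e3]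
  -- distinctness of roots
  have hr1 : A ^ 4 ≠ A⁻¹ ^ (4 * m + 2) := by
    intro h
    apply A_pow_ne_one (k := 4 + (4 * m + 2)) (by omega)
    rw [pow_add, h, ← mul_pow, inv_mul_cancel₀ hA, one_pow]
  have hr2 : A ^ 2 ≠ A⁻¹ ^ (4 * m + 2) := by
    intro h
    apply A_pow_ne_one (k := 2 + (4 * m + 2)) (by omega)
    rw [pow_add, h, ← mul_pow, inv_mul_cancel₀ hA, one_pow]
  -- coprimality
  have hc1 : IsCoprime (X - C (A ^ 4)) (X - C (A⁻¹ ^ (4 * m + 2))) :=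
    isCoprime_X_sub_C_of_isUnit_sub (sub_ne_zero_of_ne hr1).isUnit
  have hc2 : IsCoprime (X - C (A ^ 2)) (X - C (A⁻¹ ^ (4 * m + 2))) :=
    isCoprime_X_sub_C_of_isUnit_sub (sub_ne_zero_of_ne hr2).isUnit
  have hu1 : IsUnit (C (-(A⁻¹ ^ 3)) * C (-A⁻¹) ^ p : Polynomial (RatFunc ℚ)) := by
    apply IsUnit.mul
    · exact isUnit_C.mpr (isUnit_iff_ne_zero.mpr
        (neg_ne_zero.mpr (pow_ne_zero _ (inv_ne_zero hA))))
    · exact (isUnit_C.mpr (isUnit_iff_ne_zero.mpr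
        (neg_ne_zero.mpr (inv_ne_zero hA)))).pow p
  have hu2 : IsUnit (C (A ^ (4 * m + 1)) ^ q : Polynomial (RatFunc ℚ)) :=
    (isUnit_C.mpr (isUnit_iff_ne_zero.mpr (pow_ne_zero _ hA))).pow q
  have hcop : IsCoprime P Q := by
    rw [hP, hQ, hfac1, hfac2, hfac3]
    have hPeq : (C (-(A⁻¹ ^ 3)) * (X - C (A ^ 4))) * (C (-A⁻¹) * (X - C (A ^ 2))) ^ p
        = (C (-(A⁻¹ ^ 3)) * C (-A⁻¹) ^ p)
          * ((X - C (A ^ 4)) * (X - C (A ^ 2)) ^ p) := by rw [mul_pow]; ring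
    have hQeq : (C (A ^ (4 * m + 1)) * (X - C (A⁻¹ ^ (4 * m + 2)))) ^ q
        = C (A ^ (4 * m + 1)) ^ q * (X - C (A⁻¹ ^ (4 * m + 2))) ^ q := mul_pow _ _ q
    rw [hPeq, hQeq, isCoprime_mul_unit_left_left hu1, isCoprime_mul_unit_left_right hu2]
    exact (hc1.mul_left hc2.pow_left).pow_right
  obtain ⟨a, b, hab⟩ := hcop
  have hone := congrArg (Polynomial.aeval s) hab
  simp only [map_add, map_mul, map_one] at hone
  have hv : v = (Polynomial.aeval s a) ((Polynomial.aeval s P) v)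
      + (Polynomial.aeval s b) ((Polynomial.aeval s Q) v) := by
    have := congrArg (fun f : Module.End (RatFunc ℚ) V => f v) hone
    simpa [Module.End.mul_apply] using this.symm
  rw [hv]
  exact W.add_mem
    (aeval_mem_invariant s W hW a (by rwa [hPs]))
    (aeval_mem_invariant s W hW b (by rwa [hQs]))
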